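/- arXiv:math/9908157 — 3 statements merged into one kernel-verified Lean document; each statement's English description precedes it below -/
import Mathlib

section
/- The poset Q₀ satisfies the countable chain condition: for every uncountable subset {q_ν : ν < ω₁} of Q₀ there exist ν ≠ μ such that q_ν and q_μ have a common extension in Q₀ (equivalently, q_ν ∪ q_μ is a condition). -/
open scoped Ordinal

noncomputable section

/-- The points of `ω₁`, i.e. the countable ordinals. -/
abbrev Idx : Type 1 := {ν : Ordinal // ν < ω₁}

/-- The free abelian group `F'` with basis `{x_ν : ν < ω₁}`. -/
abbrev Fgrp' : Type 1 := FreeAbelianGroup Idx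

/-- The basis element `x_ν` of `F'`. -/
def xg' (ν : Idx) : Fgrp' := FreeAbelianGroup.of ν

/-- The raw data of a condition in `Q₀`: a finite set `D ⊆ E` of ordinals, and for each
`γ ∈ D` a natural number `r γ` together with the finite sequences
`η γ : {0,...,r γ − 1} → Ordinal`, `u γ` and `g γ` (recorded as total functions, of which
only the values at `γ ∈ D`, `n < r γ` are relevant). -/
structure PreCond0 (E : Set Ordinal) where
  D : Finset ↥E
  r : ↥E → ℕ
  η : ↥E → ℕ → Ordinal
  u : ↥E → ℕ → Fgrp'
  g : ↥E → ℕ → ℤ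

/-- Membership in the poset `Q₀`: for each `γ ∈ D`, `η γ` is a strictly increasing finite
sequence of length `r γ` with values `< γ`, each `u γ n` lies in the subgroup generated by
`{x_ν : ν < η γ n}`, and each `g γ n` is an integer `≥ 1`. -/
def IsCond0 {E : Set Ordinal} (q : PreCond0 E) : Prop :=
  ∀ γ ∈ q.D,
    (∀ n < q.r γ, q.η γ n < (γ : Ordinal)) ∧
    (∀ m n : ℕ, m < n → n < q.r γ → q.η γ m < q.η γ n) ∧
    (∀ n < q.r γ, q.u γ n ∈
      AddSubgroup.closure {y : Fgrp' | ∃ ν : Idx, (ν : Ordinal) < q.η γ n ∧ y = xg' ν}) ∧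
    (∀ n < q.r γ, 1 ≤ q.g γ n)

/-- `q` extends `p` in `Q₀`: `dom p ⊆ dom q` and, for `γ ∈ dom p`, the triple `q(γ)`
extends the triple `p(γ)` componentwise. -/
def Extends0 {E : Set Ordinal} (p q : PreCond0 E) : Prop :=
  p.D ⊆ q.D ∧ ∀ γ ∈ p.D, p.r γ ≤ q.r γ ∧
    ∀ n < p.r γ, p.η γ n = q.η γ n ∧ p.u γ n = q.u γ n ∧ p.g γ n = q.g γ n

/-! ### Auxiliary material for the proof -/

/-- Every condition extends itself. -/
lemma extends0_refl {E : Set Ordinal} (q : PreCond0 E) : Extends0 q q :=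
  ⟨Finset.Subset.refl _, fun _ _ => ⟨le_rfl, fun _ _ => ⟨rfl, rfl, rfl⟩⟩⟩

/-- Lists with entries in a countable set form a countable set. -/
lemma countable_lists {α : Type*} {s : Set α} (hs : s.Countable) :
    {l : List α | ∀ x ∈ l, x ∈ s}.Countable := by
  haveI := hs.to_subtype
  apply Set.Countable.mono _ (Set.countable_range (fun l : List s => l.map Subtype.val))
  intro l hl
  refine ⟨l.attach.map fun x => ⟨x.1, hl x.1 x.2⟩, ?_⟩
  simp [List.map_map, Function.comp]

/-- The set of ordinals below a countable ordinal is countable. -/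
lemma countable_Iio_omega1 {o : Ordinal.{0}} (h : o < ω₁) : (Set.Iio o).Countable := by
  rw [Cardinal.countable_iff_lt_aleph_one, Ordinal.mk_Iio_ordinal]
  have h1 : o.card < Cardinal.aleph 1 := by
    rwa [← Cardinal.lt_ord, Cardinal.ord_aleph]
  have h2 : Cardinal.lift.{1} o.card < Cardinal.lift.{1} (Cardinal.aleph 1) :=
    Cardinal.lift_lt.2 h1
  rwa [← Cardinal.succ_aleph0, Cardinal.lift_succ, Cardinal.lift_aleph0,
    Cardinal.succ_aleph0] at h2

/-- The subgroup generated by a countable set is countable. -/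
lemma countable_addClosure {G : Type*} [AddGroup G] {S : Set G} (hS : S.Countable) :
    (AddSubgroup.closure S : Set G).Countable := by
  have hS' : (S ∪ -S).Countable := hS.union (by
    apply Set.Countable.mono _ (hS.image (fun x => -x))
    intro x hx
    exact ⟨-x, hx, neg_neg x⟩)
  apply Set.Countable.mono _ ((countable_lists hS').image List.sum)
  intro x hx
  have hx' : x ∈ AddSubmonoid.closure (S ∪ -S) := by
    rw [← AddSubgroup.closure_toAddSubmonoid S]; exact hx
  obtain ⟨l, hl, rfl⟩ := AddSubmonoid.exists_list_of_mem_closure hx'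
  exact ⟨l, hl, rfl⟩

open Classical in
/-- Merge two preconditions, giving priority to the first one. -/
def merge0 {E : Set Ordinal} (p q : PreCond0 E) : PreCond0 E where
  D := p.D ∪ q.D
  r := fun γ => if γ ∈ p.D then p.r γ else q.r γ
  η := fun γ => if γ ∈ p.D then p.η γ else q.η γ
  u := fun γ => if γ ∈ p.D then p.u γ else q.u γ
  g := fun γ => if γ ∈ p.D then p.g γ else q.g γ

lemma merge0_left {E : Set Ordinal} (p q : PreCond0 E) {γ : ↥E} (h : γ ∈ p.D) :
    (merge0 p q).r γ = p.r γ ∧ (merge0 p q).η γ = p.η γ ∧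
      (merge0 p q).u γ = p.u γ ∧ (merge0 p q).g γ = p.g γ := by
  simp [merge0, h]

lemma merge0_right {E : Set Ordinal} (p q : PreCond0 E) {γ : ↥E} (h : γ ∉ p.D) :
    (merge0 p q).r γ = q.r γ ∧ (merge0 p q).η γ = q.η γ ∧
      (merge0 p q).u γ = q.u γ ∧ (merge0 p q).g γ = q.g γ := by
  simp [merge0, h]

open Classical in
/-- The main combinatorial lemma, proved by induction on the (uniform) size of the domains. -/
lemma ccc_aux (E : Set Ordinal) (hE : ∀ δ ∈ E, δ < ω₁ ∧ Order.IsSuccLimit δ) :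
    ∀ n : ℕ, ∀ T : Set (PreCond0 E), (∀ q ∈ T, IsCond0 q) → (∀ q ∈ T, q.D.card ≤ n) →
      ¬ T.Countable →
      ∃ q₁ ∈ T, ∃ q₂ ∈ T, q₁ ≠ q₂ ∧
        ∃ s : PreCond0 E, IsCond0 s ∧ Extends0 q₁ s ∧ Extends0 q₂ s := by
  intro n
  induction n with
  | zero =>
    intro T hT hcard hTc
    have h2 : ∃ q₁ ∈ T, ∃ q₂ ∈ T, q₁ ≠ q₂ := by
      by_contra h
      push_neg at h
      exact hTc (Set.Subsingleton.countable (fun a ha b hb => by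
        by_contra hne; exact hne (h a ha b hb)))
    obtain ⟨q₁, hq₁, q₂, hq₂, hne⟩ := h2
    have hD2 : q₂.D = ∅ := Finset.card_eq_zero.1 (Nat.le_zero.1 (hcard q₂ hq₂))
    refine ⟨q₁, hq₁, q₂, hq₂, hne, q₁, hT q₁ hq₁, extends0_refl q₁, ?_⟩
    exact ⟨by simp [hD2], fun γ hγ => by simp [hD2] at hγ⟩
  | succ n ih =>
    intro T hT hcard hTc
    by_cases hC : ∃ γ : ↥E, ¬ {q ∈ T | γ ∈ q.D}.Countable
    · -- Case A: some γ₀ belongs to uncountably many domains.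
      obtain ⟨γ₀, hγ₀⟩ := hC
      set T₀ : Set (PreCond0 E) := {q ∈ T | γ₀ ∈ q.D} with hT₀def
      -- the data that a condition carries at γ₀
      set key : PreCond0 E → List (Ordinal × Fgrp' × ℤ) :=
        fun q => (List.range (q.r γ₀)).map (fun m => (q.η γ₀ m, q.u γ₀ m, q.g γ₀ m)) with hkey
      have hγ₀lt : (γ₀ : Ordinal) < ω₁ := (hE γ₀ γ₀.2).1
      -- the possible entries of `key q` form a countable set
      set U : Set Fgrp' := {y : Fgrp' | ∃ ν : Idx, (ν : Ordinal) < (γ₀ : Ordinal) ∧ y = xg' ν}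
        with hU
      have hUc : U.Countable := by
        have : U ⊆ xg' '' (Subtype.val ⁻¹' Set.Iio (γ₀ : Ordinal)) := by
          rintro y ⟨ν, hν, rfl⟩
          exact ⟨ν, hν, rfl⟩
        exact Set.Countable.mono this
          (((countable_Iio_omega1 hγ₀lt).preimage Subtype.val_injective).image _)
      set S : Set (Ordinal × Fgrp' × ℤ) :=
        (Set.Iio (γ₀ : Ordinal)) ×ˢ ((AddSubgroup.closure U : Set Fgrp') ×ˢ (Set.univ : Set ℤ))
        with hS
      have hSc : S.Countable :=
        (countable_Iio_omega1 hγ₀lt).prod ((countable_addClosure hUc).prod Set.countable_univ)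
      have hkeymem : ∀ q ∈ T₀, ∀ x ∈ key q, x ∈ S := by
        rintro q ⟨hqT, hqD⟩ x hx
        obtain ⟨m, hm, rfl⟩ := by
          simpa only [hkey, List.mem_map, List.mem_range] using hx
        obtain ⟨h1, h2, h3, h4⟩ := hT q hqT γ₀ hqD
        refine ⟨h1 m hm, ?_, Set.mem_univ _⟩
        refine AddSubgroup.closure_mono ?_ (h3 m hm)
        rintro y ⟨ν, hν, rfl⟩
        exact ⟨ν, hν.trans (h1 m hm), rfl⟩
      have hkimg : (key '' T₀).Countable := by
        apply Set.Countable.mono _ (countable_lists hSc)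
        rintro l ⟨q, hq, rfl⟩
        exact hkeymem q hq
      -- some fiber of `key` on `T₀` is uncountable
      have hfiber : ∃ l ∈ key '' T₀, ¬ {q ∈ T₀ | key q = l}.Countable := by
        by_contra h
        push_neg at h
        apply hγ₀
        have : T₀ ⊆ ⋃ l ∈ key '' T₀, {q ∈ T₀ | key q = l} := by
          intro q hq
          exact Set.mem_biUnion ⟨q, hq, rfl⟩ ⟨hq, rfl⟩
        exact Set.Countable.mono this (Set.Countable.biUnion hkimg h)
      obtain ⟨l, _, hT₁c⟩ := hfiber
      set T₁ : Set (PreCond0 E) := {q ∈ T₀ | key q = l} with hT₁def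
      -- remove γ₀ from the domains
      set e : PreCond0 E → PreCond0 E :=
        fun q => ⟨q.D.erase γ₀, q.r, q.η, q.u, q.g⟩ with he
      have heinj : Set.InjOn e T₁ := by
        rintro a ⟨⟨_, haD⟩, _⟩ b ⟨⟨_, hbD⟩, _⟩ hab
        obtain ⟨a⟩ := a; obtain ⟨b⟩ := b
        simp only [he, PreCond0.mk.injEq] at hab ⊢
        obtain ⟨hD, h1, h2, h3, h4⟩ := hab
        refine ⟨?_, h1, h2, h3, h4⟩
        ext x
        by_cases hx : x = γ₀
        · subst hx; simp only at haD hbD; exact iff_of_true haD hbD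
        · constructor
          · intro h; have := hD ▸ Finset.mem_erase.2 ⟨hx, h⟩
            exact (Finset.mem_erase.1 this).2
          · intro h; have := hD.symm ▸ Finset.mem_erase.2 ⟨hx, h⟩
            exact (Finset.mem_erase.1 this).2
      have hT₂c : ¬ (e '' T₁).Countable := fun h =>
        hT₁c (Set.countable_of_injective_of_countable_image heinj h)
      have hT₂cond : ∀ p ∈ e '' T₁, IsCond0 p := by
        rintro p ⟨q, ⟨⟨hqT, _⟩, _⟩, rfl⟩
        intro γ hγ
        exact hT q hqT γ (Finset.mem_of_mem_erase hγ)
      have hT₂card : ∀ p ∈ e '' T₁, p.D.card ≤ n := by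
        rintro p ⟨q, ⟨⟨hqT, hqD⟩, _⟩, rfl⟩
        have := hcard q hqT
        simp only [he, Finset.card_erase_of_mem hqD]
        omega
      obtain ⟨p₁, hp₁, p₂, hp₂, hpne, s', hs'cond, hext₁, hext₂⟩ :=
        ih (e '' T₁) hT₂cond hT₂card hT₂c
      obtain ⟨q₁, hq₁T₁, hq₁e⟩ := hp₁
      obtain ⟨q₂, hq₂T₁, hq₂e⟩ := hp₂
      have hq₁T : q₁ ∈ T := hq₁T₁.1.1
      have hq₂T : q₂ ∈ T := hq₂T₁.1.1
      have hq₁D : γ₀ ∈ q₁.D := hq₁T₁.1.2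
      have hq₂D : γ₀ ∈ q₂.D := hq₂T₁.1.2
      have hqne : q₁ ≠ q₂ := fun h => hpne (by rw [← hq₁e, ← hq₂e, h])
      -- the two conditions carry the same data at γ₀
      have hkeyeq : key q₁ = key q₂ := by rw [hq₁T₁.2, hq₂T₁.2]
      have hreq : q₁.r γ₀ = q₂.r γ₀ := by
        have := congrArg List.length hkeyeq
        simpa [hkey] using this
      have hdataeq : ∀ m < q₂.r γ₀,
          q₂.η γ₀ m = q₁.η γ₀ m ∧ q₂.u γ₀ m = q₁.u γ₀ m ∧ q₂.g γ₀ m = q₁.g γ₀ m := by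
        intro m hm
        have hm1 : m < q₁.r γ₀ := hreq ▸ hm
        have h1 : (key q₁)[m]? = some (q₁.η γ₀ m, q₁.u γ₀ m, q₁.g γ₀ m) := by
          simp [hkey, List.getElem?_map, List.getElem?_range hm1]
        have h2 : (key q₂)[m]? = some (q₂.η γ₀ m, q₂.u γ₀ m, q₂.g γ₀ m) := by
          simp [hkey, List.getElem?_map, List.getElem?_range hm]
        rw [hkeyeq, h2] at h1
        simp only [Option.some.injEq, Prod.mk.injEq] at h1
        exact ⟨h1.1, h1.2.1, h1.2.2⟩
      -- build the common extension by adding γ₀ back to s'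
      set s : PreCond0 E :=
        ⟨insert γ₀ s'.D, Function.update s'.r γ₀ (q₁.r γ₀), Function.update s'.η γ₀ (q₁.η γ₀),
          Function.update s'.u γ₀ (q₁.u γ₀), Function.update s'.g γ₀ (q₁.g γ₀)⟩ with hs
      have hsat : s.r γ₀ = q₁.r γ₀ ∧ s.η γ₀ = q₁.η γ₀ ∧ s.u γ₀ = q₁.u γ₀ ∧ s.g γ₀ = q₁.g γ₀ := by
        simp [hs]
      have hsne : ∀ γ : ↥E, γ ≠ γ₀ → s.r γ = s'.r γ ∧ s.η γ = s'.η γ ∧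
          s.u γ = s'.u γ ∧ s.g γ = s'.g γ := by
        intro γ hγ
        simp [hs, Function.update_of_ne hγ]
      have hscond : IsCond0 s := by
        intro γ hγ
        by_cases hγ0 : γ = γ₀
        · subst hγ0
          rw [hsat.1, hsat.2.1, hsat.2.2.1, hsat.2.2.2]
          exact hT q₁ hq₁T γ hq₁D
        · have hγs' : γ ∈ s'.D := by
            rcases Finset.mem_insert.1 hγ with h | h
            · exact absurd h hγ0
            · exact h
          rw [(hsne γ hγ0).1, (hsne γ hγ0).2.1, (hsne γ hγ0).2.2.1, (hsne γ hγ0).2.2.2]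
          exact hs'cond γ hγs'
      have hDsub : ∀ q : PreCond0 E, γ₀ ∈ q.D → (e q).D ⊆ s'.D → q.D ⊆ s.D := by
        intro q hq hsub x hx
        by_cases hx0 : x = γ₀
        · subst hx0; exact Finset.mem_insert_self _ _
        · exact Finset.mem_insert_of_mem (hsub (Finset.mem_erase.2 ⟨hx0, hx⟩))
      have hextend : ∀ (q : PreCond0 E), γ₀ ∈ q.D → Extends0 (e q) s' →
          (q.r γ₀ ≤ s.r γ₀ ∧ ∀ m < q.r γ₀,
            q.η γ₀ m = s.η γ₀ m ∧ q.u γ₀ m = s.u γ₀ m ∧ q.g γ₀ m = s.g γ₀ m) →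
          Extends0 q s := by
        intro q hqD hext hat
        refine ⟨hDsub q hqD hext.1, fun γ hγ => ?_⟩
        by_cases hγ0 : γ = γ₀
        · subst hγ0; exact hat
        · have hγe : γ ∈ (e q).D := Finset.mem_erase.2 ⟨hγ0, hγ⟩
          obtain ⟨hr, hrest⟩ := hext.2 γ hγe
          obtain ⟨h1, h2, h3, h4⟩ := hsne γ hγ0
          exact ⟨h1 ▸ hr, fun m hm => by
            obtain ⟨e1, e2, e3⟩ := hrest m hm
            exact ⟨h2 ▸ e1, h3 ▸ e2, h4 ▸ e3⟩⟩
      refine ⟨q₁, hq₁T, q₂, hq₂T, hqne, s, hscond, ?_, ?_⟩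
      · refine hextend q₁ hq₁D (hq₁e ▸ hext₁) ⟨hsat.1 ▸ le_rfl, fun m _ => ?_⟩
        rw [hsat.2.1, hsat.2.2.1, hsat.2.2.2]
        exact ⟨rfl, rfl, rfl⟩
      · refine hextend q₂ hq₂D (hq₂e ▸ hext₂) ⟨?_, fun m hm => ?_⟩
        · rw [hsat.1, ← hreq]
        · rw [hsat.2.1, hsat.2.2.1, hsat.2.2.2]
          exact hdataeq m hm
    · -- Case B: every γ belongs to only countably many domains.
      push_neg at hC
      have hTn : T.Nonempty := by
        rcases T.eq_empty_or_nonempty with h | h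
        · exact absurd (h ▸ Set.countable_empty) hTc
        · exact h
      obtain ⟨q₁, hq₁⟩ := hTn
      set Bad : Set (PreCond0 E) := (⋃ γ ∈ (q₁.D : Set ↥E), {q ∈ T | γ ∈ q.D}) ∪ {q₁}
        with hBad
      have hBadc : Bad.Countable :=
        (Set.Countable.biUnion q₁.D.countable_toSet (fun γ _ => hC γ)).union
          (Set.countable_singleton q₁)
      have hq₂ : ∃ q₂ ∈ T, q₂ ∉ Bad := by
        by_contra h
        push_neg at h
        exact hTc (Set.Countable.mono h hBadc)
      obtain ⟨q₂, hq₂T, hq₂B⟩ := hq₂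
      have hne : q₁ ≠ q₂ := fun h => hq₂B (Or.inr (h ▸ rfl))
      have hdisj : ∀ γ ∈ q₁.D, γ ∉ q₂.D := by
        intro γ hγ hγ2
        exact hq₂B (Or.inl (Set.mem_biUnion hγ ⟨hq₂T, hγ2⟩))
      refine ⟨q₁, hq₁, q₂, hq₂T, hne, merge0 q₁ q₂, ?_, ?_, ?_⟩
      · intro γ hγ
        by_cases h : γ ∈ q₁.D
        · obtain ⟨h1, h2, h3, h4⟩ := merge0_left q₁ q₂ h
          rw [h1, h2, h3, h4]
          exact hT q₁ hq₁ γ h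
        · have hγ2 : γ ∈ q₂.D := by
            rcases Finset.mem_union.1 hγ with h' | h'
            · exact absurd h' h
            · exact h'
          obtain ⟨h1, h2, h3, h4⟩ := merge0_right q₁ q₂ h
          rw [h1, h2, h3, h4]
          exact hT q₂ hq₂T γ hγ2
      · refine ⟨Finset.subset_union_left, fun γ hγ => ?_⟩
        obtain ⟨h1, h2, h3, h4⟩ := merge0_left q₁ q₂ hγ
        rw [h1, h2, h3, h4]
        exact ⟨le_rfl, fun m _ => ⟨rfl, rfl, rfl⟩⟩
      · refine ⟨Finset.subset_union_right, fun γ hγ => ?_⟩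
        have h : γ ∉ q₁.D := fun h' => hdisj γ h' hγ
        obtain ⟨h1, h2, h3, h4⟩ := merge0_right q₁ q₂ h
        rw [h1, h2, h3, h4]
        exact ⟨le_rfl, fun m _ => ⟨rfl, rfl, rfl⟩⟩

/-- the poset `Q₀` satisfies the countable chain condition: any uncountable
subset of `Q₀` contains two distinct conditions with a common extension in `Q₀`. -/
theorem stmt10 (E : Set Ordinal) (hE : ∀ δ ∈ E, δ < ω₁ ∧ Order.IsSuccLimit δ) :
    ∀ T : Set (PreCond0 E), (∀ q ∈ T, IsCond0 q) → ¬ T.Countable →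
      ∃ q₁ ∈ T, ∃ q₂ ∈ T, q₁ ≠ q₂ ∧
        ∃ s : PreCond0 E, IsCond0 s ∧ Extends0 q₁ s ∧ Extends0 q₂ s := by
  intro T hT hTc
  have hpiece : ∃ n : ℕ, ¬ {q ∈ T | q.D.card = n}.Countable := by
    by_contra h
    push_neg at h
    apply hTc
    have : T ⊆ ⋃ n : ℕ, {q ∈ T | q.D.card = n} := fun q hq =>
      Set.mem_iUnion.2 ⟨q.D.card, hq, rfl⟩
    exact Set.Countable.mono this (Set.countable_iUnion h)
  obtain ⟨n, hn⟩ := hpiece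
  obtain ⟨q₁, hq₁, q₂, hq₂, hne, s, hs⟩ :=
    ccc_aux E hE n {q ∈ T | q.D.card = n} (fun q hq => hT q hq.1)
      (fun q hq => hq.2.le) hn
  exact ⟨q₁, hq₁.1, q₂, hq₂.1, hne, s, hs⟩

end
end

section
/- Let G be a torsion-free abelian group of finite rank that is not free but such that every subgroup of G of strictly smaller rank is free. Then every homomorphism from G into an ℵ₁-free abelian group is zero. -/
open scoped TensorProduct
open Cardinal

set_option maxHeartbeats 1000000
set_option synthInstance.maxHeartbeats 400000

noncomputable section

/-- An abelian group is `ℵ₁`-free if every countable subgroup is free abelian. -/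
def Aleph1Free (L : Type*) [AddCommGroup L] : Prop :=
  ∀ S : AddSubgroup L, Countable S → Module.Free ℤ S

/-- The rank of a torsion-free abelian group: the dimension of the `ℚ`-vector space
`ℚ ⊗ G`. -/
def rkQ (G : Type*) [AddCommGroup G] : Cardinal :=
  Module.rank ℚ (ℚ ⊗[ℤ] G)

/-- The canonical map `M → ℚ ⊗ M` is injective for torsion-free `M`. -/
lemma mk_one_injective (M : Type*) [AddCommGroup M] [NoZeroSMulDivisors ℤ M] :
    Function.Injective (TensorProduct.mk ℤ ℚ M 1) := by
  haveI : IsLocalizedModule (nonZeroDivisors ℤ) (TensorProduct.mk ℤ ℚ M 1) :=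
    (isLocalizedModule_iff_isBaseChange (nonZeroDivisors ℤ) ℚ _).mpr
      (TensorProduct.isBaseChange ℤ M ℚ)
  intro x y hxy
  have h0 : (TensorProduct.mk ℤ ℚ M 1) (x - y) = 0 := by
    rw [map_sub, hxy, sub_self]
  obtain ⟨s, hs⟩ := (IsLocalizedModule.eq_zero_iff (nonZeroDivisors ℤ) _).mp h0
  have hs0 : (s : ℤ) ≠ 0 := nonZeroDivisors.coe_ne_zero s
  have hsmul : (s : ℤ) • (x - y) = 0 := hs
  rcases smul_eq_zero.mp hsmul with h | h
  · exact absurd h hs0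
  · exact sub_eq_zero.mp h

/-- A torsion-free abelian group of finite rank is countable. -/
lemma countable_of_rkQ_lt_aleph0 (M : Type*) [AddCommGroup M] [NoZeroSMulDivisors ℤ M]
    (h : rkQ M < ℵ₀) : Countable M := by
  haveI : Module.Finite ℚ (ℚ ⊗[ℤ] M) := Module.rank_lt_aleph0_iff.mp h
  haveI : Countable (ℚ ⊗[ℤ] M) :=
    (Module.finBasis ℚ (ℚ ⊗[ℤ] M)).equivFun.injective.countable
  exact (mk_one_injective M).countable

universe uu

/-- `rkQ` is invariant under additive equivalence. -/
lemma rkQ_congr {M N : Type uu} [AddCommGroup M] [AddCommGroup N] (e : M ≃+ N) :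
    rkQ M = rkQ N :=
  LinearEquiv.rank_eq (e.toIntLinearEquiv.baseChange ℤ ℚ)

/-- An `ℵ₁`-free group is torsion-free. -/
lemma noZeroSMulDivisors_of_aleph1Free (L : Type*) [AddCommGroup L] (hL : Aleph1Free L) :
    NoZeroSMulDivisors ℤ L := by
  constructor
  intro c x h
  by_contra hc
  push_neg at hc
  obtain ⟨hc0, hx0⟩ := hc
  set S := AddSubgroup.zmultiples x with hS
  haveI : Countable ↥S := by
    have hsurj : Function.Surjective (fun n : ℤ => (⟨n • x, AddSubgroup.zsmul_mem _
        (AddSubgroup.mem_zmultiples x) n⟩ : ↥S)) := by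
      rintro ⟨y, hy⟩
      obtain ⟨k, hk⟩ := AddSubgroup.mem_zmultiples_iff.mp hy
      exact ⟨k, Subtype.ext hk⟩
    exact hsurj.countable
  haveI := hL S inferInstance
  haveI : NoZeroSMulDivisors ℤ ↥S := by
    haveI := IsAddTorsionFree.of_isTorsionFree (R := ℤ) (M := ↥S); infer_instance
  have hy : (⟨x, AddSubgroup.mem_zmultiples x⟩ : ↥S) ≠ 0 := by
    intro hh; exact hx0 (congrArg Subtype.val hh)
  have : c • (⟨x, AddSubgroup.mem_zmultiples x⟩ : ↥S) = 0 := Subtype.ext h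
  rcases smul_eq_zero.mp this with h' | h'
  · exact hc0 h'
  · exact hy h'

/-- if `G` is a torsion-free abelian group of finite rank which is not free,
but every subgroup of `G` of strictly smaller rank is free, then every homomorphism from
`G` into an `ℵ₁`-free abelian group is zero. -/
theorem stmt12 (G : Type*) [AddCommGroup G] [NoZeroSMulDivisors ℤ G]
    (hfinrk : rkQ G < ℵ₀) (hnotfree : ¬ Module.Free ℤ G)
    (hsmall : ∀ G' : AddSubgroup G, rkQ G' < rkQ G → Module.Free ℤ G')
    (L : Type*) [AddCommGroup L] (hL : Aleph1Free L) (f : G →+ L) :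
    f = 0 := by
  by_contra hf
  haveI : NoZeroSMulDivisors ℤ L := noZeroSMulDivisors_of_aleph1Free L hL
  set φ := f.toIntLinearMap with hφ
  set K := LinearMap.ker φ with hK
  haveI : Countable G := countable_of_rkQ_lt_aleph0 G hfinrk
  -- the range of f is free
  haveI hcr : Countable ↥f.range := (Set.countable_range f).to_subtype
  have hRfree : Module.Free ℤ ↥f.range := hL f.range hcr
  have hRfree' : Module.Free ℤ ↥(LinearMap.range φ) := by
    have e : ↥f.range ≃+ ↥(LinearMap.range φ) :=
      ⟨⟨fun x => ⟨x.1, x.2⟩, fun x => ⟨x.1, x.2⟩, fun _ => rfl, fun _ => rfl⟩, fun _ _ => rfl⟩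
    exact Module.Free.of_equiv (R := ℤ) (M := ↥f.range) e.toIntLinearEquiv
  haveI hQfree : Module.Free ℤ (G ⧸ K) :=
    Module.Free.of_equiv (R := ℤ) (M := ↥(LinearMap.range φ)) (φ.quotKerEquivRange).symm
  -- flatness of ℚ over ℤ
  haveI : Module.Flat ℤ ℚ := IsLocalization.flat ℚ (nonZeroDivisors ℤ)
  have hbcinj : Function.Injective (K.subtype.baseChange ℚ) := by
    rw [show ⇑(K.subtype.baseChange ℚ) = ⇑(K.subtype.lTensor ℚ) from LinearMap.baseChange_eq_ltensor _]
    exact Module.Flat.lTensor_preserves_injective_linearMap K.subtype K.injective_subtype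
  have hle : rkQ ↥K ≤ rkQ G := LinearMap.rank_le_of_injective _ hbcinj
  -- strictness of the rank inequality
  have hKlt : rkQ ↥K < rkQ G := by
    refine lt_of_le_of_ne hle ?_
    intro heq
    haveI : Module.Finite ℚ (ℚ ⊗[ℤ] G) := Module.rank_lt_aleph0_iff.mp hfinrk
    haveI : Module.Finite ℚ (ℚ ⊗[ℤ] ↥K) :=
      Module.rank_lt_aleph0_iff.mp (lt_of_le_of_lt hle hfinrk)
    have hfr : Module.finrank ℚ (ℚ ⊗[ℤ] ↥K) = Module.finrank ℚ (ℚ ⊗[ℤ] G) := by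
      simp only [Module.finrank]
      exact congrArg Cardinal.toNat heq
    have hsurj : Function.Surjective (K.subtype.baseChange ℚ) :=
      (LinearMap.injective_iff_surjective_of_finrank_eq_finrank hfr).mp hbcinj
    -- hence ℚ ⊗ (G ⧸ K) = 0
    have hq0 : (K.mkQ.baseChange ℚ).comp (K.subtype.baseChange ℚ) = 0 := by
      rw [← LinearMap.baseChange_comp]
      have h0 : K.mkQ ∘ₗ K.subtype = 0 := by
        ext ⟨x, hx⟩
        simpa [Submodule.Quotient.mk_eq_zero] using hx
      rw [h0, LinearMap.baseChange_zero]
    have hqsurj : Function.Surjective (K.mkQ.baseChange ℚ) := by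
      rw [show ⇑(K.mkQ.baseChange ℚ) = ⇑(K.mkQ.lTensor ℚ) from LinearMap.baseChange_eq_ltensor _]
      exact LinearMap.lTensor_surjective ℚ (Submodule.mkQ_surjective K)
    have hzero : ∀ z : ℚ ⊗[ℤ] (G ⧸ K), z = 0 := by
      intro z
      obtain ⟨w, rfl⟩ := hqsurj z
      obtain ⟨v, rfl⟩ := hsurj w
      exact LinearMap.congr_fun hq0 v
    haveI hsub : Subsingleton (ℚ ⊗[ℤ] (G ⧸ K)) :=
      ⟨fun a b => by rw [hzero a, hzero b]⟩
    -- but ℚ ⊗ (range φ) is nontrivial, contradiction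
    haveI hsub' : Subsingleton (ℚ ⊗[ℤ] ↥(LinearMap.range φ)) :=
      (TensorProduct.congr (LinearEquiv.refl ℤ ℚ) φ.quotKerEquivRange).symm.toEquiv.subsingleton
    obtain ⟨x, hx⟩ : ∃ x, f x ≠ 0 := by
      by_contra h
      push_neg at h
      exact hf (AddMonoidHom.ext h)
    have hy : (⟨f x, ⟨x, rfl⟩⟩ : ↥(LinearMap.range φ)) ≠ 0 := by
      intro hh; exact hx (congrArg Subtype.val hh)
    haveI : NoZeroSMulDivisors ℤ ↥(LinearMap.range φ) :=
      Function.Injective.noZeroSMulDivisors Subtype.val Subtype.val_injective rfl (fun _ _ => rfl)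
    have := mk_one_injective ↥(LinearMap.range φ)
      (Subsingleton.elim ((TensorProduct.mk ℤ ℚ _ 1) (⟨f x, ⟨x, rfl⟩⟩ : ↥(LinearMap.range φ)))
        ((TensorProduct.mk ℤ ℚ _ 1) 0))
    exact hy this
  -- K is free
  have hKfree : Module.Free ℤ ↥K := by
    have e : ↥K.toAddSubgroup ≃+ ↥K :=
      ⟨⟨fun x => ⟨x.1, x.2⟩, fun x => ⟨x.1, x.2⟩, fun _ => rfl, fun _ => rfl⟩, fun _ _ => rfl⟩
    have hlt : rkQ ↥K.toAddSubgroup < rkQ G := by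
      rwa [rkQ_congr e]
    have := hsmall K.toAddSubgroup hlt
    exact Module.Free.of_equiv (R := ℤ) (M := ↥K.toAddSubgroup) e.toIntLinearEquiv
  -- split the exact sequence 0 → K → G → G⧸K → 0
  obtain ⟨s, hs⟩ := Module.projective_lifting_property K.mkQ (LinearMap.id)
    (Submodule.mkQ_surjective K)
  obtain ⟨e, -⟩ := (LinearMap.exact_subtype_mkQ K).splitSurjectiveEquiv
    (Submodule.injective_subtype K) ⟨s, hs⟩
  haveI := hKfree
  exact hnotfree (Module.Free.of_equiv (R := ℤ) (M := ↥K × (G ⧸ K)) e.symm)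

end
end

section
/- Every ℵ₁-free abelian group of infinite rank contains a pure subgroup that is free abelian of countably infinite rank. -/
open scoped TensorProduct
open Cardinal

noncomputable section

/-- A subgroup `P` of an abelian group `H` is pure if whenever `n` divides `a ∈ P` in `H`,
`n` divides `a` in `P`. -/
def IsPureSubgroup {H : Type*} [AddCommGroup H] (P : AddSubgroup H) : Prop :=
  ∀ (n : ℤ), ∀ a ∈ P, (∃ b : H, n • b = a) → ∃ c ∈ P, n • c = a

/-- The `ℤ`-span of a countable set is countable. -/
lemma countable_span_int {H : Type*} [AddCommGroup H] (s : Set H) (hs : s.Countable) :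
    Countable (Submodule.span ℤ s) := by
  haveI : Countable s := hs.to_subtype
  have h2 : (↑(Submodule.span ℤ s) : Set H).Countable := by
    have h1 : (Set.range (Finsupp.linearCombination ℤ ((↑) : s → H))).Countable :=
      Set.countable_range _
    rwa [← LinearMap.coe_range, Finsupp.range_linearCombination, Subtype.range_coe] at h1
  exact h2.to_subtype

/-- every `ℵ₁`-free abelian group of infinite rank contains a pure subgroup
which is free abelian of countably infinite rank. -/
theorem stmt14 (H : Type*) [AddCommGroup H] (hfree : Aleph1Free H)
    (hrk : ℵ₀ ≤ rkQ H) :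
    ∃ P : AddSubgroup H, IsPureSubgroup P ∧ Nonempty (Module.Basis ℕ ℤ P) := by
  classical
  -- Step 1: H is torsion-free
  haveI hNZ : NoZeroSMulDivisors ℤ H := by
    constructor
    intro n a hna
    by_cases hn : n = 0
    · exact Or.inl hn
    right
    set S := (Submodule.span ℤ ({a} : Set H)).toAddSubgroup with hS
    haveI : Countable S := countable_span_int _ (Set.countable_singleton a)
    haveI : Module.Free ℤ S := hfree S inferInstance
    have hmem : a ∈ S := Submodule.subset_span rfl
    have h0 : n • (⟨a, hmem⟩ : S) = 0 := by
      ext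
      simpa using hna
    rcases smul_eq_zero.mp h0 with h | h
    · exact absurd h hn
    · exact congrArg Subtype.val h
  -- Step 2: a `ℚ`-linearly independent family of pure tensors
  set f : H → ℚ ⊗[ℤ] H := fun x => (1 : ℚ) ⊗ₜ[ℤ] x with hf
  have hspan : Submodule.span ℚ (Set.range f) = ⊤ := by
    rw [Submodule.eq_top_iff']
    intro x
    induction x using TensorProduct.induction_on with
    | zero => exact zero_mem _
    | tmul q h =>
        have : q ⊗ₜ[ℤ] h = q • ((1 : ℚ) ⊗ₜ[ℤ] h) := by
          rw [TensorProduct.smul_tmul', smul_eq_mul, mul_one]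
        rw [this]
        exact Submodule.smul_mem _ _ (Submodule.subset_span ⟨h, rfl⟩)
    | add x y hx hy => exact add_mem hx hy
  obtain ⟨b, hbsub, hbspan, hbind⟩ := exists_linearIndependent ℚ (Set.range f)
  rw [hspan] at hbspan
  have hbrank : ℵ₀ ≤ #b := by
    refine le_trans hrk ?_
    have h1 : rkQ H = Module.rank ℚ (Submodule.span ℚ b) := by
      rw [hbspan, rkQ]
      exact (rank_top ℚ _).symm
    rw [h1]
    exact rank_span_le b
  haveI : Infinite b := Cardinal.aleph0_le_mk_iff.mp hbrank
  set e := Infinite.natEmbedding b with he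
  have hgind : LinearIndependent ℚ (fun i : ℕ => ((e i : ℚ ⊗[ℤ] H))) :=
    hbind.comp e e.injective
  have hchoice : ∀ i : ℕ, ∃ x : H, f x = (e i : ℚ ⊗[ℤ] H) := fun i => hbsub (e i).2
  choose h hh using hchoice
  -- Step 3: h is ℤ-linearly independent
  have hliQ : LinearIndependent ℚ (fun i => f (h i)) := by
    simpa only [hh] using hgind
  have hliZ' : LinearIndependent ℤ (fun i => f (h i)) := by
    refine hliQ.restrict_scalars ?_
    intro x y hxy
    simpa using hxy
  have hli : LinearIndependent ℤ h := by
    have : (fun i => f (h i)) = (TensorProduct.mk ℤ ℚ H 1) ∘ h := rfl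
    rw [this] at hliZ'
    exact LinearIndependent.of_comp _ hliZ'
  -- Step 4: the countable subgroup S and its purification P
  set S := Submodule.span ℤ (Set.range h) with hSdef
  haveI hScnt : Countable S := countable_span_int _ (Set.countable_range h)
  set P : AddSubgroup H :=
    { carrier := {x | ∃ n : ℤ, n ≠ 0 ∧ n • x ∈ S}
      zero_mem' := ⟨1, one_ne_zero, by simp⟩
      add_mem' := by
        rintro x y ⟨n, hn, hnx⟩ ⟨m, hm, hmy⟩
        refine ⟨n * m, mul_ne_zero hn hm, ?_⟩
        have hx : (n * m) • x ∈ S := by rw [mul_comm, mul_smul]; exact S.smul_mem m hnx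
        have hy : (n * m) • y ∈ S := by rw [mul_smul]; exact S.smul_mem n hmy
        rw [smul_add]
        exact S.add_mem hx hy
      neg_mem' := by
        rintro x ⟨n, hn, hnx⟩
        exact ⟨n, hn, by rw [smul_neg]; exact S.neg_mem hnx⟩ } with hPdef
  have hPmem : ∀ x : H, x ∈ P ↔ ∃ n : ℤ, n ≠ 0 ∧ n • x ∈ S := fun x => Iff.rfl
  -- purity
  have hpure : IsPureSubgroup P := by
    intro n a ha ⟨c, hc⟩
    by_cases hn : n = 0
    · subst hn
      simp only [zero_smul] at hc
      exact ⟨0, P.zero_mem, by simp [← hc]⟩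
    · obtain ⟨m, hm, hma⟩ := (hPmem a).mp ha
      refine ⟨c, (hPmem c).mpr ⟨m * n, mul_ne_zero hm hn, ?_⟩, hc⟩
      rw [mul_smul, hc]
      exact hma
  -- P is countable
  have hwit : ∀ p : P, ∃ q : ℤ × S, q.1 ≠ 0 ∧ q.1 • (p : H) = (q.2 : H) := by
    rintro ⟨x, n, hn, hnx⟩
    exact ⟨(n, ⟨n • x, hnx⟩), hn, rfl⟩
  choose F hF1 hF2 using hwit
  have hFinj : Function.Injective F := by
    intro p q hpq
    have h1 : (F p).1 = (F q).1 := by rw [hpq]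
    have h2 : (F p).1 • (p : H) = (F p).1 • (q : H) := by
      rw [hF2 p, h1, hF2 q, hpq]
    have := smul_right_injective H (hF1 p) h2
    exact Subtype.ext this
  haveI hPcnt : Countable P := Function.Injective.countable hFinj
  haveI hPfree : Module.Free ℤ P := hfree P hPcnt
  -- the family h lands in P and stays independent
  have hmemP : ∀ i : ℕ, h i ∈ P := fun i =>
    (hPmem (h i)).mpr ⟨1, one_ne_zero, by simpa using Submodule.subset_span (Set.mem_range_self i)⟩
  set g : ℕ → P := fun i => ⟨h i, hmemP i⟩ with hg
  have hgli : LinearIndependent ℤ g := by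
    have hcomp : h = (P.subtype.toIntLinearMap : P →ₗ[ℤ] H) ∘ g := rfl
    rw [hcomp] at hli
    exact LinearIndependent.of_comp _ hli
  have hrkP : ℵ₀ ≤ Module.rank ℤ P := hgli.aleph0_le_rank
  -- extract a basis indexed by ℕ
  set bP := Module.Free.chooseBasis ℤ P with hbP
  haveI : Countable (Module.Free.ChooseBasisIndex ℤ P) :=
    Function.Injective.countable bP.injective
  haveI : Infinite (Module.Free.ChooseBasisIndex ℤ P) := by
    rw [← Cardinal.aleph0_le_mk_iff, bP.mk_eq_rank'']
    exact hrkP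
  haveI : Encodable (Module.Free.ChooseBasisIndex ℤ P) :=
    Encodable.ofCountable _
  haveI : Denumerable (Module.Free.ChooseBasisIndex ℤ P) :=
    Denumerable.ofEncodableOfInfinite _
  exact ⟨P, hpure, ⟨bP.reindex (Denumerable.eqv _)⟩⟩

end
end
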